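/- Let E be a barrelled locally convex Hausdorff topological vector space over ℂ in which every bounded subset is relatively compact (i.e. E is a Montel space), let T : E → E be a continuous linear operator, let E′_β denote the topological dual of E equipped with the strong topology β(E′,E) of uniform convergence on bounded subsets of E, and let Tᵗ : E′_β → E′_β, Tᵗu = u ∘ T, be the transpose of T. Then T is mean ergodic on E if and only if Tᵗ is mean ergodic on E′_β. -/

import Mathlib

open Filter Topology

/-- The `n`-th Cesàro mean of `T` applied to `x`: `(1/n) ∑_{m=1}^{n} Tᵐ x`. -/
noncomputable def cesaroMean {E : Type*} [AddCommGroup E] [Module ℂ E] [TopologicalSpace E]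
    (T : E →L[ℂ] E) (n : ℕ) (x : E) : E :=
  (n : ℂ)⁻¹ • ∑ m ∈ Finset.Icc 1 n, (T ^ m) x

/-- The `n`-th Cesàro mean of the transpose `Tᵗ`, `Tᵗ u = u ∘ T`, applied to a continuous
linear functional `u`:  `(1/n) ∑_{m=1}^{n} (Tᵗ)ᵐ u = (1/n) ∑_{m=1}^{n} u ∘ Tᵐ`.  Here the
dual `E →L[ℂ] ℂ` carries its canonical strong topology `β(E′,E)` of uniform convergence on
bounded subsets of `E`. -/
noncomputable def cesaroMeanTranspose {E : Type*} [AddCommGroup E] [Module ℂ E]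
    [TopologicalSpace E] [IsTopologicalAddGroup E] [ContinuousSMul ℂ E]
    (T : E →L[ℂ] E) (n : ℕ) (u : E →L[ℂ] ℂ) : E →L[ℂ] ℂ :=
  (n : ℂ)⁻¹ • ∑ m ∈ Finset.Icc 1 n, u.comp (T ^ m)

/-! ### Auxiliary results: Mackey's theorem (weakly bounded implies bounded) -/

section Mackey

/-- In a normed space over `ℂ`, a weakly bounded set is norm bounded. -/
lemma aux_normed_weak_bounded {X : Type*} [NormedAddCommGroup X] [NormedSpace ℂ X] (s : Set X)
    (h : ∀ φ : X →L[ℂ] ℂ, ∃ C, ∀ x ∈ s, ‖φ x‖ ≤ C) : ∃ C, ∀ x ∈ s, ‖x‖ ≤ C := by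
  have h' : ∀ φ : StrongDual ℂ X, ∃ C, ∀ i : s,
      ‖NormedSpace.inclusionInDoubleDual ℂ X i φ‖ ≤ C := by
    intro φ
    obtain ⟨C, hC⟩ := h φ
    exact ⟨C, fun i => hC i i.2⟩
  obtain ⟨C', hC'⟩ := banach_steinhaus h'
  refine ⟨max C' 0, fun x hx => NormedSpace.norm_le_dual_bound ℂ x (le_max_right _ _) fun f => ?_⟩
  calc ‖f x‖ = ‖NormedSpace.inclusionInDoubleDual ℂ X x f‖ := rfl
    _ ≤ ‖NormedSpace.inclusionInDoubleDual ℂ X x‖ * ‖f‖ := ContinuousLinearMap.le_opNorm _ _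
    _ ≤ max C' 0 * ‖f‖ := by
        gcongr
        exact le_max_of_le_left (hC' ⟨x, hx⟩)

variable {E : Type*} [AddCommGroup E] [Module ℂ E]

/-- Type synonym for `E` equipped with the seminormed structure coming from a seminorm `p`. -/
@[nolint unusedArguments]
def SeminormAux (_p : Seminorm ℂ E) : Type _ := E

/-- The identity map from `E` into `SeminormAux p`. -/
def SeminormAux.of (p : Seminorm ℂ E) (x : E) : SeminormAux p := x

instance (p : Seminorm ℂ E) : AddCommGroup (SeminormAux p) := inferInstanceAs (AddCommGroup E)

noncomputable instance (p : Seminorm ℂ E) : SeminormedAddCommGroup (SeminormAux p) :=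
  AddGroupSeminorm.toSeminormedAddCommGroup
    (p.toAddGroupSeminorm : AddGroupSeminorm (SeminormAux p))

instance (p : Seminorm ℂ E) : Module ℂ (SeminormAux p) := inferInstanceAs (Module ℂ E)

noncomputable instance (p : Seminorm ℂ E) : NormedSpace ℂ (SeminormAux p) where
  norm_smul_le c x := by
    change p (c • x) ≤ ‖c‖ * p x
    exact le_of_eq (map_smul_eq_mul p c (x : E))

lemma SeminormAux.norm_of (p : Seminorm ℂ E) (x : E) : ‖SeminormAux.of p x‖ = p x := rfl

/-- A linear functional dominated by a continuous seminorm is continuous. -/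
lemma aux_cont_of_seminorm_bound [UniformSpace E] [IsUniformAddGroup E]
    (p : Seminorm ℂ E) (hp : Continuous p) (u : E →ₗ[ℂ] ℂ) (C : ℝ)
    (hu : ∀ x, ‖u x‖ ≤ C * p x) : Continuous u := by
  refine continuous_of_continuousAt_zero u ?_
  rw [ContinuousAt, map_zero]
  rw [tendsto_zero_iff_norm_tendsto_zero]
  have hp0 : Tendsto (fun x => C * p x) (𝓝 (0 : E)) (𝓝 0) := by
    have := (hp.tendsto 0).const_mul C
    simpa using this
  exact squeeze_zero (fun x => norm_nonneg _) hu hp0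

/-- A weakly bounded set is bounded with respect to any continuous seminorm. -/
lemma aux_seminorm_bound [UniformSpace E] [IsUniformAddGroup E]
    (p : Seminorm ℂ E) (hp : Continuous p) (s : Set E)
    (h : ∀ u : E →L[ℂ] ℂ, ∃ C, ∀ x ∈ s, ‖u x‖ ≤ C) : ∃ C, ∀ x ∈ s, p x ≤ C := by
  classical
  set X := SeminormAux p
  let j : E → SeparationQuotient X := fun x => SeparationQuotient.mk (SeminormAux.of p x)
  have hw : ∀ φ : SeparationQuotient X →L[ℂ] ℂ, ∃ C, ∀ y ∈ j '' s, ‖φ y‖ ≤ C := by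
    intro φ
    set ψ : X →L[ℂ] ℂ := φ.comp (SeparationQuotient.mkCLM ℂ X) with hψ
    let u₀ : E →ₗ[ℂ] ℂ :=
      { toFun := fun x => ψ (SeminormAux.of p x)
        map_add' := fun a b => ψ.map_add _ _
        map_smul' := fun c a => ψ.map_smul c _ }
    have hcont : Continuous u₀ := by
      refine aux_cont_of_seminorm_bound p hp u₀ ‖ψ‖ fun x => ?_
      calc ‖ψ (SeminormAux.of p x)‖ ≤ ‖ψ‖ * ‖SeminormAux.of p x‖ :=
            ContinuousLinearMap.le_opNorm _ _
        _ = ‖ψ‖ * p x := by rw [SeminormAux.norm_of]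
    obtain ⟨C, hC⟩ := h ⟨u₀, hcont⟩
    refine ⟨C, ?_⟩
    rintro y ⟨x, hx, rfl⟩
    exact hC x hx
  obtain ⟨C, hC⟩ := aux_normed_weak_bounded (j '' s) hw
  refine ⟨C, fun x hx => ?_⟩
  have := hC (j x) (Set.mem_image_of_mem j hx)
  rwa [show ‖j x‖ = p x from rfl] at this

/-- **Mackey's theorem**: in a locally convex space, a weakly bounded set is bounded. -/
lemma aux_mackey [Module ℝ E] [IsScalarTower ℝ ℂ E]
    [UniformSpace E] [IsUniformAddGroup E] [ContinuousSMul ℂ E] [LocallyConvexSpace ℝ E]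
    (s : Set E) (h : ∀ u : E →L[ℂ] ℂ, ∃ C, ∀ x ∈ s, ‖u x‖ ≤ C) :
    Bornology.IsVonNBounded ℂ s := by
  haveI : ContinuousSMul ℝ E := IsScalarTower.continuousSMul ℂ
  letI : PartialOrder ℂ := Complex.partialOrder
  haveI : LocallyConvexSpace ℂ E := by
    rw [locallyConvexSpace_iff_exists_convex_subset_zero]
    intro U hU
    obtain ⟨S, hS, hSc, hSU⟩ := (locallyConvexSpace_iff_exists_convex_subset_zero ℝ E).mp ‹_› U hU
    refine ⟨S, hS, ?_, hSU⟩
    intro x hx y hy a b ha hb hab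
    have hre : ∀ c : ℂ, 0 ≤ c → 0 ≤ c.re ∧ c = ((c.re : ℝ) : ℂ) := by
      intro c hc
      obtain ⟨h1, h2⟩ := Complex.le_def.mp hc
      exact ⟨by simpa using h1, Complex.ext (by simp) (by simpa using h2.symm)⟩
    obtain ⟨ha0, ha'⟩ := hre a ha
    obtain ⟨hb0, hb'⟩ := hre b hb
    have key : ∀ (r : ℝ) (v : E), ((r : ℂ)) • v = r • v := fun r v => by
      rw [← smul_one_smul ℂ r v, Complex.real_smul, mul_one]
    rw [ha', hb', key, key]
    exact hSc hx hy ha0 hb0 (by have := congrArg Complex.re hab; simpa using this)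
  have hws := with_gaugeSeminormFamily (𝕜 := ℂ) (E := E)
  rw [hws.isVonNBounded_iff_seminorm_bounded]
  intro i
  have hpc : Continuous (gaugeSeminormFamily ℂ E i) := hws.continuous_seminorm i
  obtain ⟨C, hC⟩ := aux_seminorm_bound (gaugeSeminormFamily ℂ E i) hpc s h
  refine ⟨max C 0 + 1, by positivity, fun x hx => ?_⟩
  have := hC x hx
  have h1 : (gaugeSeminormFamily ℂ E i) x ≤ max C 0 := le_max_of_le_left this
  linarith

end Mackey

/-- On a Montel space `E`, an operator `T` is mean ergodic on `E` if and only if its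
transpose `Tᵗ` is mean ergodic on the strong dual `E′_β`. -/
theorem stmt6 {E : Type*} [AddCommGroup E] [Module ℂ E] [Module ℝ E] [IsScalarTower ℝ ℂ E]
    [UniformSpace E] [IsUniformAddGroup E] [ContinuousSMul ℂ E]
    [LocallyConvexSpace ℝ E] [T2Space E]
    -- `E` is barrelled: every pointwise bounded family of continuous linear operators on `E`
    -- is equicontinuous (Banach–Steinhaus property)
    (hbarrelled : ∀ (ι : Type) (f : ι → E →L[ℂ] E),
      (∀ x : E, Bornology.IsVonNBounded ℂ (Set.range fun i => f i x)) →
        Equicontinuous fun i => ⇑(f i))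
    -- every bounded subset of `E` is relatively compact
    (hmontel : ∀ s : Set E, Bornology.IsVonNBounded ℂ s → IsCompact (closure s))
    (T : E →L[ℂ] E) :
    -- `T` is mean ergodic on `E` ...
    (∃ P : E →L[ℂ] E, ∀ x : E,
        Tendsto (fun n : ℕ => cesaroMean T (n + 1) x) atTop (𝓝 (P x))) ↔
      -- ... if and only if `Tᵗ` is mean ergodic on the strong dual `E′_β`
      (∃ Q : (E →L[ℂ] ℂ) →L[ℂ] (E →L[ℂ] ℂ), ∀ u : E →L[ℂ] ℂ,
        Tendsto (fun n : ℕ => cesaroMeanTranspose T (n + 1) u) atTop (𝓝 (Q u))) := by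
  classical
  -- the Cesàro means as continuous linear operators
  set S : ℕ → E →L[ℂ] E :=
    fun n => (((n + 1 : ℕ) : ℂ))⁻¹ • ∑ m ∈ Finset.Icc 1 (n + 1), T ^ m with hS
  have hSapp : ∀ (n : ℕ) (x : E), S n x = cesaroMean T (n + 1) x := by
    intro n x
    simp [hS, cesaroMean, ContinuousLinearMap.sum_apply]
  have hTapp : ∀ (n : ℕ) (u : E →L[ℂ] ℂ), cesaroMeanTranspose T (n + 1) u = u.comp (S n) := by
    intro n u
    ext x
    simp [cesaroMeanTranspose, hS, ContinuousLinearMap.sum_apply, map_smul, map_sum]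
  constructor
  · -- forward direction
    rintro ⟨P, hP⟩
    have hPt : ∀ x : E, Tendsto (fun n => S n x) atTop (𝓝 (P x)) := by
      intro x
      rw [show (fun n : ℕ => S n x) = fun n : ℕ => cesaroMean T (n + 1) x from
        funext fun n => hSapp n x]
      exact hP x
    have heq : Equicontinuous fun n => ⇑(S n) :=
      hbarrelled ℕ S fun x => (hPt x).isVonNBounded_range ℂ
    have key : ∀ K : Set E, IsCompact K →
        TendstoUniformlyOn (fun n x => S n x) (⇑P) atTop K := by
      intro K hK
      have h𝔖c : ∀ A ∈ ({K} : Set (Set E)), IsCompact A := by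
        intro A hA
        rw [Set.mem_singleton_iff] at hA
        rwa [hA]
      have hec : ∀ A ∈ ({K} : Set (Set E)), EquicontinuousOn (fun n => ⇑(S n)) A :=
        fun A _ => heq.equicontinuousOn A
      have hpi : Tendsto ((⋃₀ ({K} : Set (Set E))).restrict ∘ fun n => ⇑(S n)) atTop
          (𝓝 ((⋃₀ ({K} : Set (Set E))).restrict ⇑P)) := by
        rw [tendsto_pi_nhds]
        intro y
        exact hPt y.1
      have h1 := (EquicontinuousOn.tendsto_uniformOnFun_iff_pi' h𝔖c hec atTop ⇑P).mpr hpi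
      have h2 := UniformOnFun.tendsto_iff_tendstoUniformlyOn.mp h1 K rfl
      exact h2
    refine ⟨ContinuousLinearMap.precomp ℂ P, fun u => ?_⟩
    rw [show (fun n : ℕ => cesaroMeanTranspose T (n + 1) u) = fun n => u.comp (S n) from
      funext fun n => hTapp n u]
    have : Tendsto (fun n => u.comp (S n) :
        ℕ → UniformConvergenceCLM (RingHom.id ℂ) ℂ {s : Set E | Bornology.IsVonNBounded ℂ s})
        atTop (𝓝 (u.comp P)) := by
      apply (UniformConvergenceCLM.tendsto_iff_tendstoUniformlyOn (σ := RingHom.id ℂ) (F := ℂ)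
        {s : Set E | Bornology.IsVonNBounded ℂ s}).mpr
      intro s hs
      have h1 := key (closure s) (hmontel s hs)
      have h2 := (ContinuousLinearMap.uniformContinuous u).comp_tendstoUniformlyOn h1
      exact h2.mono subset_closure
    exact this
  · -- reverse direction
    rintro ⟨Q, hQ⟩
    haveI : ContinuousSMul ℝ E := IsScalarTower.continuousSMul ℂ
    -- pointwise weak convergence of the means
    have hweak : ∀ (x : E) (u : E →L[ℂ] ℂ),
        Tendsto (fun n => u (S n x)) atTop (𝓝 (Q u x)) := by
      intro x u
      have h1 : Tendsto (fun n => cesaroMeanTranspose T (n + 1) u) atTop (𝓝 (Q u)) := hQ u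
      have h2 := ((continuous_eval_const (x := x)).tendsto (Q u)).comp h1
      have h3 : (fun n => (cesaroMeanTranspose T (n + 1) u) x) = fun n => u (S n x) := by
        funext n
        rw [hTapp]
        rfl
      rwa [show (fun f : E →L[ℂ] ℂ => f x) ∘ (fun n => cesaroMeanTranspose T (n + 1) u)
        = fun n => u (S n x) from h3 ▸ rfl] at h2
    -- orbits are bounded (weak boundedness + Mackey)
    have hbound : ∀ x : E, Bornology.IsVonNBounded ℂ (Set.range fun n => S n x) := by
      intro x
      apply aux_mackey
      intro u
      obtain ⟨C, hC⟩ := ((hweak x u).norm.bddAbove_range)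
      refine ⟨C, ?_⟩
      rintro y ⟨n, rfl⟩
      exact hC (Set.mem_range_self n)
    have heq : Equicontinuous fun n => ⇑(S n) := hbarrelled ℕ S hbound
    -- complex functionals separate points
    have hsep : ∀ y z : E, (∀ u : E →L[ℂ] ℂ, u y = u z) → y = z := by
      intro y z hyz
      by_contra hne
      obtain ⟨f, hf⟩ := SeparatingDual.exists_separating_of_ne (R := ℝ) hne
      apply hf
      have h1 := StrongDual.re_extendRCLike_apply (𝕜 := ℂ) f y
      have h2 := StrongDual.re_extendRCLike_apply (𝕜 := ℂ) f z
      rw [← h1, ← h2, hyz (StrongDual.extendRCLike f)]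
    -- limits of the orbits exist
    have hlim : ∀ x : E, ∃ y, Tendsto (fun n => S n x) atTop (𝓝 y) := by
      intro x
      have hK : IsCompact (closure (Set.range fun n => S n x)) := hmontel _ (hbound x)
      have hmem : ∀ n : ℕ, S n x ∈ closure (Set.range fun n => S n x) :=
        fun n => subset_closure (Set.mem_range_self n)
      have hle : map (fun n => S n x) atTop ≤ 𝓟 (closure (Set.range fun n => S n x)) :=
        Filter.tendsto_principal.mpr (Filter.Eventually.of_forall hmem)
      obtain ⟨y, hyK, hy⟩ := hK.exists_clusterPt hle
      have hclus : ∀ z : E, MapClusterPt z atTop (fun n => S n x) →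
          ∀ u : E →L[ℂ] ℂ, u z = Q u x := by
        intro z hz u
        have h1 : MapClusterPt (u z) atTop (⇑u ∘ fun n => S n x) :=
          hz.continuousAt_comp u.continuous.continuousAt
        have h2 : map (⇑u ∘ fun n => S n x) atTop ≤ 𝓝 (Q u x) := hweak x u
        have h3 : (𝓝 (u z) ⊓ 𝓝 (Q u x)).NeBot :=
          h1.neBot.mono (inf_le_inf_left _ h2)
        exact eq_of_nhds_neBot h3
      have hmem' : ∀ᶠ n in (atTop : Filter ℕ), S n x ∈ closure (Set.range fun n => S n x) :=
        Filter.Eventually.of_forall hmem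
      refine ⟨y, hK.tendsto_nhds_of_unique_mapClusterPt hmem' ?_⟩
      intro z hzK hz
      exact hsep z y fun u => (hclus z hz u).trans (hclus y hy u).symm
    choose Pl hPl using hlim
    have hadd : ∀ a b : E, Pl (a + b) = Pl a + Pl b := by
      intro a b
      have h1 := hPl (a + b)
      rw [show (fun n => S n (a + b)) = fun n => S n a + S n b from
        funext fun n => map_add (S n) a b] at h1
      exact tendsto_nhds_unique h1 ((hPl a).add (hPl b))
    have hsmul : ∀ (c : ℂ) (a : E), Pl (c • a) = c • Pl a := by
      intro c a
      have h1 := hPl (c • a)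
      rw [show (fun n => S n (c • a)) = fun n => c • S n a from
        funext fun n => map_smul (S n) c a] at h1
      exact tendsto_nhds_unique h1 ((hPl a).const_smul c)
    have hTend : Tendsto (fun n => ⇑(S n)) atTop (𝓝 Pl) := by
      rw [tendsto_pi_nhds]
      exact hPl
    have hcont : Continuous Pl := hTend.continuous_of_equicontinuous heq
    refine ⟨⟨⟨⟨Pl, hadd⟩, hsmul⟩, hcont⟩, fun x => ?_⟩
    rw [show (fun n : ℕ => cesaroMean T (n + 1) x) = fun n => S n x from
      funext fun n => (hSapp n x).symm]
    exact hPl x
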